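/- Let A' and B' be integers with A' ≡ 189 (mod 256) and B' ≡ ±1 (mod 256), and set A = 4A', B = 16B'. Then the 2-adic valuation of the discriminant Δ = 4A³ + 27B² of y² = x³ + Ax + B equals 14, and Δ/2¹⁴ ≡ 1 (mod 4). -/
import Mathlib


/-- If `A' ≡ 189 (mod 256)`, `B' ≡ ±1 (mod 256)`, `A = 4A'` and `B = 16B'`, then the
discriminant `Δ = 4A³ + 27B²` has 2-adic valuation `14`, and its odd part `Δ/2¹⁴` is
congruent to `1 (mod 4)`. -/
theorem stmt_8 (A' B' A B : ℤ) (hA' : A' ≡ 189 [ZMOD 256])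
    (hB' : B' ≡ 1 [ZMOD 256] ∨ B' ≡ -1 [ZMOD 256])
    (hA : A = 4 * A') (hB : B = 16 * B') :
    padicValInt 2 (4 * A ^ 3 + 27 * B ^ 2) = 14 ∧
      (4 * A ^ 3 + 27 * B ^ 2) / 2 ^ 14 ≡ 1 [ZMOD 4] := by
  -- extract k with A' = 256k + 189
  obtain ⟨k, hk⟩ := (Int.modEq_iff_dvd.mp hA'.symm)
  have hA'' : A' = 189 + 256 * k := by linarith
  -- extract u with B'^2 = 1 + 512 u
  have hu : ∃ u : ℤ, B' ^ 2 = 1 + 512 * u := by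
    rcases hB' with h | h
    · obtain ⟨l, hl⟩ := (Int.modEq_iff_dvd.mp h.symm)
      have : B' = 1 + 256 * l := by linarith
      exact ⟨l + 128 * l ^ 2, by rw [this]; ring⟩
    · obtain ⟨l, hl⟩ := (Int.modEq_iff_dvd.mp h.symm)
      have : B' = -1 + 256 * l := by linarith
      exact ⟨-l + 128 * l ^ 2, by rw [this]; ring⟩
  obtain ⟨u, hu⟩ := hu
  set w : ℤ := 105489 + 428652 * k + 580608 * k ^ 2 + 262144 * k ^ 3 + 216 * u with hw
  have hN : 4 * A ^ 3 + 27 * B ^ 2 = 2 ^ 14 * w := by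
    subst hA hB
    have : B' ^ 2 = 1 + 512 * u := hu
    rw [hw, hA'']
    linear_combination 6912 * this
  have hwodd : ¬ (2 : ℤ) ∣ w := by
    rw [hw]
    generalize k ^ 2 = s
    generalize k ^ 3 = t
    omega
  constructor
  · rw [hN, padicValInt.mul (by positivity) (by
      intro h; exact hwodd (h ▸ dvd_zero 2))]
    have h1 : padicValInt 2 ((2 : ℤ) ^ 14) = 14 := by
      have : ((2 : ℤ) ^ 14) = ((2 ^ 14 : ℕ) : ℤ) := by norm_num
      rw [this, padicValInt.of_nat, padicValNat.prime_pow]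
    have h2 : padicValInt 2 w = 0 := padicValInt.eq_zero_of_not_dvd hwodd
    omega
  · rw [hN]
    rw [Int.mul_ediv_cancel_left _ (by positivity)]
    show w % 4 = 1 % 4
    rw [hw]
    generalize k ^ 2 = s
    generalize k ^ 3 = t
    omega
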